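/- Let v be a submodular valuation on K=3 goods {i,j,k} with v(∅)=0 such that δ_{ij} < min{δ_{ik}, δ_{jk}}, where δ_{xy} = v(x)+v(y)−v(xy), and suppose prices p satisfy 0 ≤ δ_{ij} < v(j)−p_j < v(i)−p_i = v(k)−p_k < min{δ_{ik}, δ_{jk}}. Then {i,j} ∈ D(p), i.e., {i,j} maximizes v(A) − p·A over all bundles A. -/
import Mathlib


theorem S3_violation_demand
    (v : Finset (Fin 3) → ℝ) (hv0 : v ∅ = 0)
    (hsub : ∀ A B : Finset (Fin 3), v (A ∪ B) + v (A ∩ B) ≤ v A + v B)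
    (i j k : Fin 3) (hij : i ≠ j) (hik : i ≠ k) (hjk : j ≠ k)
    (p : Fin 3 → ℝ) (hp : ∀ m, 0 ≤ p m)
    (h0 : 0 ≤ v {i} + v {j} - v {i, j})
    (h1 : v {i} + v {j} - v {i, j} < v {j} - p j)
    (h2 : v {j} - p j < v {i} - p i)
    (h3 : v {i} - p i = v {k} - p k)
    (h4 : v {i} - p i < min (v {i} + v {k} - v {i, k}) (v {j} + v {k} - v {j, k})) :
    ∀ B : Finset (Fin 3),
      v B - ∑ m ∈ B, p m ≤ v {i, j} - ∑ m ∈ ({i, j} : Finset (Fin 3)), p m := by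
  have tri : ∀ x : Fin 3, x = i ∨ x = j ∨ x = k := fun x =>
    (by decide : ∀ i j k x : Fin 3, i ≠ j → i ≠ k → j ≠ k → x = i ∨ x = j ∨ x = k)
      i j k x hij hik hjk
  have h4i : v {i} - p i < v {i} + v {k} - v {i, k} := lt_of_lt_of_le h4 (min_le_left _ _)
  have h4j : v {i} - p i < v {j} + v {k} - v {j, k} := lt_of_lt_of_le h4 (min_le_right _ _)
  have sumij : ∑ m ∈ ({i, j} : Finset (Fin 3)), p m = p i + p j := Finset.sum_pair hij
  have sumik : ∑ m ∈ ({i, k} : Finset (Fin 3)), p m = p i + p k := Finset.sum_pair hik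
  have sumjk : ∑ m ∈ ({j, k} : Finset (Fin 3)), p m = p j + p k := Finset.sum_pair hjk
  have sumijk : ∑ m ∈ ({i, j, k} : Finset (Fin 3)), p m = p i + (p j + p k) := by
    rw [Finset.sum_insert (by simp [hij, hik]), Finset.sum_pair hjk]
  have hji := hij.symm
  have hki := hik.symm
  have hkj := hjk.symm
  have hunion : ({i, j} : Finset (Fin 3)) ∪ {j, k} = {i, j, k} := by
    ext x
    simp only [Finset.mem_union, Finset.mem_insert, Finset.mem_singleton]
    tauto
  have hinter : ({i, j} : Finset (Fin 3)) ∩ {j, k} = {j} := by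
    ext x; simp only [Finset.mem_inter, Finset.mem_insert, Finset.mem_singleton]
    constructor
    · rintro ⟨h1 | h1, h2 | h2⟩ <;> first | assumption | (exfalso; exact hik (h1.symm.trans h2))
    · rintro rfl; exact ⟨Or.inr rfl, Or.inl rfl⟩
  have subfull : v {i, j, k} + v {j} ≤ v {i, j} + v {j, k} := by
    have := hsub {i, j} {j, k}
    rwa [hunion, hinter] at this
  intro B
  by_cases hi : i ∈ B <;> by_cases hj : j ∈ B <;> by_cases hk : k ∈ B
  · have hB : B = {i, j, k} := by
      ext x; rcases tri x with rfl | rfl | rfl <;> simp [hi, hj, hk, hij, hik, hjk, hji, hki, hkj]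
    subst hB; rw [sumijk, sumij]; linarith
  · have hB : B = {i, j} := by
      ext x; rcases tri x with rfl | rfl | rfl <;> simp [hi, hj, hk, hij, hik, hjk, hji, hki, hkj]
    subst hB; rw [sumij]
  · have hB : B = {i, k} := by
      ext x; rcases tri x with rfl | rfl | rfl <;> simp [hi, hj, hk, hij, hik, hjk, hji, hki, hkj]
    subst hB; rw [sumik, sumij]; linarith
  · have hB : B = {i} := by
      ext x; rcases tri x with rfl | rfl | rfl <;> simp [hi, hj, hk, hij, hik, hjk, hji, hki, hkj]
    subst hB; rw [Finset.sum_singleton, sumij]; linarith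
  · have hB : B = {j, k} := by
      ext x; rcases tri x with rfl | rfl | rfl <;> simp [hi, hj, hk, hij, hik, hjk, hji, hki, hkj]
    subst hB; rw [sumjk, sumij]; linarith
  · have hB : B = {j} := by
      ext x; rcases tri x with rfl | rfl | rfl <;> simp [hi, hj, hk, hij, hik, hjk, hji, hki, hkj]
    subst hB; rw [Finset.sum_singleton, sumij]; linarith
  · have hB : B = {k} := by
      ext x; rcases tri x with rfl | rfl | rfl <;> simp [hi, hj, hk, hij, hik, hjk, hji, hki, hkj]
    subst hB; rw [Finset.sum_singleton, sumij]; linarith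
  · have hB : B = ∅ := by
      ext x; rcases tri x with rfl | rfl | rfl <;> simp [hi, hj, hk, hij, hik, hjk, hji, hki, hkj]
    subst hB; rw [Finset.sum_empty, sumij, hv0]; linarith
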